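/- Let z = (a,b,c,d)/h and z' = (a',b',c',d')/h' be two distinct rational points of 𝐒²_III, where (a,b,c,d) and (a',b',c',d') are integer vectors with gcd(a,b,c,d) = 1, gcd(a',b',c',d') = 1, h = a+b+c+d ≥ 1, h' = a'+b'+c'+d' ≥ 1, and a²+b²+c²+d² = h², a'²+b'²+c'²+d'² = h'². Let 𝐜 = (1/4,1/4,1/4,1/4) and R = √3/2, and define the horosphere at z to be the sphere of radius ρ = √3/(2 + √6·h) centered at 𝐜 + (1 − ρ/R)·(z − 𝐜) (internally tangent to 𝐒²_III at z), and similarly with primes. Then the Euclidean distance between the two centers is at least the sum ρ + ρ' of the two radii (the horospheres are tangent or disjoint), with equality (tangency) if and only if ab' + ac' + ad' + ba' + bc' + bd' + ca' + cb' + cd' + da' + db' + dc' = 1. -/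

import Mathlib

set_option maxHeartbeats 1000000 in
/-- Horosphere tangency on `𝐒²_III`.  Let `z = (a,b,c,d)/h` and `z' = (a',b',c',d')/h'`
be two distinct rational points of `𝐒²_III` (`gcd(a,b,c,d) = 1`, `h = a+b+c+d ≥ 1`,
`a²+b²+c²+d² = h²`, and similarly with primes).  With `𝐜 = (1/4,1/4,1/4,1/4)` and
`R = √3/2`, the horosphere at `z` has radius `ρ = √3/(2+√6·h)` and center
`𝐜 + (1 − ρ/R)·(z − 𝐜)`.  Then the distance between the two centers is at least
`ρ + ρ'`, with equality (tangency) if and only if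
`ab' + ac' + ad' + ba' + bc' + bd' + ca' + cb' + cd' + da' + db' + dc' = 1`. -/
theorem horospheres_S2III (a b c d a' b' c' d' h h' : ℤ)
    (hh : h = a + b + c + d) (hh' : h' = a' + b' + c' + d')
    (hpos : 1 ≤ h) (hpos' : 1 ≤ h')
    (hsq : a ^ 2 + b ^ 2 + c ^ 2 + d ^ 2 = h ^ 2)
    (hsq' : a' ^ 2 + b' ^ 2 + c' ^ 2 + d' ^ 2 = h' ^ 2)
    (hgcd : Int.gcd (Int.gcd (Int.gcd a b) c) d = 1)
    (hgcd' : Int.gcd (Int.gcd (Int.gcd a' b') c') d' = 1)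
    (z z' cc : EuclideanSpace ℝ (Fin 4))
    (hcc : ∀ i, cc i = 1 / 4)
    (hz0 : z 0 = (a : ℝ) / h) (hz1 : z 1 = (b : ℝ) / h)
    (hz2 : z 2 = (c : ℝ) / h) (hz3 : z 3 = (d : ℝ) / h)
    (hz0' : z' 0 = (a' : ℝ) / h') (hz1' : z' 1 = (b' : ℝ) / h')
    (hz2' : z' 2 = (c' : ℝ) / h') (hz3' : z' 3 = (d' : ℝ) / h')
    (hne : z ≠ z')
    (ρ ρ' : ℝ) (hρ : ρ = Real.sqrt 3 / (2 + Real.sqrt 6 * h))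
    (hρ' : ρ' = Real.sqrt 3 / (2 + Real.sqrt 6 * h')) :
    ρ + ρ' ≤ dist (cc + (1 - ρ / (Real.sqrt 3 / 2)) • (z - cc))
        (cc + (1 - ρ' / (Real.sqrt 3 / 2)) • (z' - cc)) ∧
    (dist (cc + (1 - ρ / (Real.sqrt 3 / 2)) • (z - cc))
          (cc + (1 - ρ' / (Real.sqrt 3 / 2)) • (z' - cc)) = ρ + ρ' ↔
      a * b' + a * c' + a * d' + b * a' + b * c' + b * d' + c * a' + c * b' + c * d'
          + d * a' + d * b' + d * c' = 1) := by
  have hs3 : Real.sqrt 3 ^ 2 = 3 := Real.sq_sqrt (by norm_num)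
  have hs3p : (0:ℝ) < Real.sqrt 3 := Real.sqrt_pos.mpr (by norm_num)
  have hs6 : Real.sqrt 6 ^ 2 = 6 := Real.sq_sqrt (by norm_num)
  have hs6p : (0:ℝ) < Real.sqrt 6 := Real.sqrt_pos.mpr (by norm_num)
  set s3 := Real.sqrt 3 with hs3def
  set s6 := Real.sqrt 6 with hs6def
  have hhr : (1:ℝ) ≤ (h:ℝ) := by exact_mod_cast hpos
  have hhr' : (1:ℝ) ≤ (h':ℝ) := by exact_mod_cast hpos'
  have hh0 : (0:ℝ) < (h:ℝ) := by linarith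
  have hh0' : (0:ℝ) < (h':ℝ) := by linarith
  have hhne : (h:ℝ) ≠ 0 := ne_of_gt hh0
  have hhne' : (h':ℝ) ≠ 0 := ne_of_gt hh0'
  have hup : (0:ℝ) < 2 + s6 * h := by have := mul_pos hs6p hh0; linarith
  have hup' : (0:ℝ) < 2 + s6 * h' := by have := mul_pos hs6p hh0'; linarith
  have hune : (2 + s6 * (h:ℝ)) ≠ 0 := ne_of_gt hup
  have hune' : (2 + s6 * (h':ℝ)) ≠ 0 := ne_of_gt hup'
  set T : ℤ := a * b' + a * c' + a * d' + b * a' + b * c' + b * d' + c * a' + c * b' + c * d'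
      + d * a' + d * b' + d * c' with hT
  have hS : a * a' + b * b' + c * c' + d * d' = h * h' - T := by rw [hT, hh, hh']; ring
  have hSR : (a:ℝ) * a' + (b:ℝ) * b' + (c:ℝ) * c' + (d:ℝ) * d' = (h:ℝ) * h' - (T:ℝ) := by
    exact_mod_cast hS
  have hsqR : (a:ℝ)^2 + (b:ℝ)^2 + (c:ℝ)^2 + (d:ℝ)^2 = (h:ℝ)^2 := by exact_mod_cast hsq
  have hsqR' : (a':ℝ)^2 + (b':ℝ)^2 + (c':ℝ)^2 + (d':ℝ)^2 = (h':ℝ)^2 := by exact_mod_cast hsq'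
  have hhR : (h:ℝ) = (a:ℝ) + b + c + d := by exact_mod_cast hh
  have hhR' : (h':ℝ) = (a':ℝ) + b' + c' + d' := by exact_mod_cast hh'
  -- T ≥ 1
  have hTpos : (1:ℤ) ≤ T := by
    have hd2 : (z 0 - z' 0)^2 + (z 1 - z' 1)^2 + (z 2 - z' 2)^2 + (z 3 - z' 3)^2
        = 2 * (T:ℝ) / ((h:ℝ) * h') := by
      rw [hz0, hz1, hz2, hz3, hz0', hz1', hz2', hz3']
      rw [div_sub_div _ _ hhne hhne', div_sub_div _ _ hhne hhne',
          div_sub_div _ _ hhne hhne', div_sub_div _ _ hhne hhne',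
          div_pow, div_pow, div_pow, div_pow,
          ← add_div, ← add_div, ← add_div,
          div_eq_div_iff (by positivity) (by positivity)]
      linear_combination ((h:ℝ)*h') * ((h':ℝ)^2 * hsqR + (h:ℝ)^2 * hsqR'
        - 2*(h:ℝ)*(h':ℝ)*hSR)
    have hdzz : (z 0 - z' 0)^2 + (z 1 - z' 1)^2 + (z 2 - z' 2)^2 + (z 3 - z' 3)^2
        = dist z z' ^ 2 := by
      rw [EuclideanSpace.dist_eq, Fin.sum_univ_four,
        Real.sq_sqrt (by positivity)]
      simp [Real.dist_eq, sq_abs]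
    have hpos2 : (0:ℝ) < 2 * (T:ℝ) / ((h:ℝ) * h') := by
      rw [← hd2, hdzz]; exact pow_pos (dist_pos.mpr hne) 2
    have hTR : (0:ℝ) < (T:ℝ) := by
      by_contra hle; push_neg at hle
      have h1 : 2 * (T:ℝ) ≤ 0 := by linarith
      have h2 : (0:ℝ) ≤ (h:ℝ) * h' := le_of_lt (mul_pos hh0 hh0')
      have := div_nonpos_of_nonpos_of_nonneg h1 h2
      linarith
    exact_mod_cast hTR
  -- sums
  have sumA : (a:ℝ)/h + (b:ℝ)/h + (c:ℝ)/h + (d:ℝ)/h = 1 := by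
    field_simp; linear_combination -hhR
  have sumA' : (a':ℝ)/h' + (b':ℝ)/h' + (c':ℝ)/h' + (d':ℝ)/h' = 1 := by
    field_simp; linear_combination -hhR'
  have sumA2 : ((a:ℝ)/h)^2 + ((b:ℝ)/h)^2 + ((c:ℝ)/h)^2 + ((d:ℝ)/h)^2 = 1 := by
    field_simp; linear_combination hsqR
  have sumA2' : ((a':ℝ)/h')^2 + ((b':ℝ)/h')^2 + ((c':ℝ)/h')^2 + ((d':ℝ)/h')^2 = 1 := by
    field_simp; linear_combination hsqR'
  have sumAA' : ((a:ℝ)/h)*((a':ℝ)/h') + ((b:ℝ)/h)*((b':ℝ)/h') + ((c:ℝ)/h)*((c':ℝ)/h')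
      + ((d:ℝ)/h)*((d':ℝ)/h') = 1 - (T:ℝ)/((h:ℝ)*h') := by
    field_simp; linear_combination hSR
  -- center distance components
  set X := cc + (1 - ρ / (s3 / 2)) • (z - cc) with hX
  set Y := cc + (1 - ρ' / (s3 / 2)) • (z' - cc) with hY
  have happ : ∀ (w : EuclideanSpace ℝ (Fin 4)) (t : ℝ) (i : Fin 4),
      (cc + t • (w - cc)) i = cc i + t * (w i - cc i) := by
    intro w t i; simp [PiLp.add_apply, PiLp.smul_apply, PiLp.sub_apply]
  have hρR : ρ / (s3/2) = 2 / (2 + s6 * h) := by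
    rw [hρ]; field_simp
  have hρR' : ρ' / (s3/2) = 2 / (2 + s6 * h') := by
    rw [hρ']; field_simp
  set E : ℝ := (X 0 - Y 0)^2 + (X 1 - Y 1)^2 + (X 2 - Y 2)^2 + (X 3 - Y 3)^2 with hE
  have hX0 : X 0 = 1/4 + (1 - 2/(2 + s6*h)) * ((a:ℝ)/h - 1/4) := by
    rw [hX, happ, hcc, hz0, hρR]
  have hX1 : X 1 = 1/4 + (1 - 2/(2 + s6*h)) * ((b:ℝ)/h - 1/4) := by
    rw [hX, happ, hcc, hz1, hρR]
  have hX2 : X 2 = 1/4 + (1 - 2/(2 + s6*h)) * ((c:ℝ)/h - 1/4) := by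
    rw [hX, happ, hcc, hz2, hρR]
  have hX3 : X 3 = 1/4 + (1 - 2/(2 + s6*h)) * ((d:ℝ)/h - 1/4) := by
    rw [hX, happ, hcc, hz3, hρR]
  have hY0 : Y 0 = 1/4 + (1 - 2/(2 + s6*h')) * ((a':ℝ)/h' - 1/4) := by
    rw [hY, happ, hcc, hz0', hρR']
  have hY1 : Y 1 = 1/4 + (1 - 2/(2 + s6*h')) * ((b':ℝ)/h' - 1/4) := by
    rw [hY, happ, hcc, hz1', hρR']
  have hY2 : Y 2 = 1/4 + (1 - 2/(2 + s6*h')) * ((c':ℝ)/h' - 1/4) := by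
    rw [hY, happ, hcc, hz2', hρR']
  have hY3 : Y 3 = 1/4 + (1 - 2/(2 + s6*h')) * ((d':ℝ)/h' - 1/4) := by
    rw [hY, happ, hcc, hz3', hρR']
  -- stage 1
  have stage1 : E = 3/4 * ((1 - 2/(2 + s6*h)) - (1 - 2/(2 + s6*h')))^2
      + 2 * (1 - 2/(2 + s6*h)) * (1 - 2/(2 + s6*h')) * (T:ℝ)/((h:ℝ)*h') := by
    rw [hE, hX0, hX1, hX2, hX3, hY0, hY1, hY2, hY3]
    linear_combination (1 - 2/(2 + s6*h))^2 * sumA2 + (1 - 2/(2 + s6*h'))^2 * sumA2'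
      - 2*(1 - 2/(2 + s6*h))*(1 - 2/(2 + s6*h'))*sumAA'
      - ((1 - 2/(2 + s6*h)) - (1 - 2/(2 + s6*h')))/2 * (1 - 2/(2 + s6*h)) * sumA
      + ((1 - 2/(2 + s6*h)) - (1 - 2/(2 + s6*h')))/2 * (1 - 2/(2 + s6*h')) * sumA'
  -- stage 2
  have stage2 : 3/4 * ((1 - 2/(2 + s6*h)) - (1 - 2/(2 + s6*h')))^2
      + 2 * (1 - 2/(2 + s6*h)) * (1 - 2/(2 + s6*h')) * (T:ℝ)/((h:ℝ)*h')
      = (ρ + ρ')^2 + 12 * ((T:ℝ) - 1) / ((2 + s6*h) * (2 + s6*h')) := by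
    have hPne : ((2 + s6*(h:ℝ)) * (2 + s6*(h':ℝ))) ≠ 0 := mul_ne_zero hune hune'
    have e1 : 1 - 2/(2 + s6*(h:ℝ)) = s6*h/(2 + s6*h) := by
      rw [eq_div_iff hune]; field_simp; ring
    have e1' : 1 - 2/(2 + s6*(h':ℝ)) = s6*h'/(2 + s6*h') := by
      rw [eq_div_iff hune']; field_simp; ring
    have eA : s6*(h:ℝ)/(2 + s6*h) - s6*(h':ℝ)/(2 + s6*h')
        = (2*s6*((h:ℝ)-h'))/((2 + s6*h) * (2 + s6*h')) := by
      rw [div_sub_div _ _ hune hune']; congr 1; ring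
    have eB : 3/4*((2*s6*((h:ℝ)-h'))/((2 + s6*h) * (2 + s6*h')))^2
        = (18*((h:ℝ)-h')^2)/((2 + s6*(h:ℝ)) * (2 + s6*(h':ℝ)))^2 := by
      rw [div_pow, ← mul_div_assoc]; congr 1
      linear_combination 3*((h:ℝ)-h')^2*hs6
    have eC : 2 * (s6*(h:ℝ)/(2 + s6*h)) * (s6*(h':ℝ)/(2 + s6*h')) * (T:ℝ)/((h:ℝ)*h')
        = 12*(T:ℝ)/((2 + s6*(h:ℝ)) * (2 + s6*(h':ℝ))) := by
      rw [div_eq_div_iff (mul_ne_zero hhne hhne') hPne]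
      field_simp
      linear_combination 2*hs6
    have eD : (s3/(2 + s6*(h:ℝ)) + s3/(2 + s6*(h':ℝ)))^2
        = (3*(4 + s6*h + s6*h')^2)/((2 + s6*(h:ℝ)) * (2 + s6*(h':ℝ)))^2 := by
      rw [div_add_div _ _ hune hune', div_pow]; congr 1
      linear_combination (4 + s6*(h:ℝ) + s6*(h':ℝ))^2*hs3
    have eF : 1/((2 + s6*(h:ℝ)) * (2 + s6*(h':ℝ)))
        = ((2 + s6*(h:ℝ)) * (2 + s6*(h':ℝ)))/((2 + s6*(h:ℝ)) * (2 + s6*(h':ℝ)))^2 := by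
      rw [eq_div_iff (pow_ne_zero 2 hPne), one_div, inv_mul_eq_div, pow_two,
        mul_div_assoc, div_self hPne, mul_one]
    have eG : (18*((h:ℝ)-h')^2)/((2 + s6*(h:ℝ)) * (2 + s6*(h':ℝ)))^2
        + (12*((2 + s6*(h:ℝ)) * (2 + s6*(h':ℝ))))/((2 + s6*(h:ℝ)) * (2 + s6*(h':ℝ)))^2
        = (3*(4 + s6*h + s6*h')^2)/((2 + s6*(h:ℝ)) * (2 + s6*(h':ℝ)))^2 := by
      rw [← add_div]; congr 1
      linear_combination -3*((h:ℝ)-h')^2*hs6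
    rw [hρ, hρ', e1, e1', eA, eB, eC, eD]
    linear_combination eG + 12 * eF
  have hEval : E = (ρ + ρ')^2 + 12 * ((T:ℝ) - 1) / ((2 + s6*h) * (2 + s6*h')) :=
    stage1.trans stage2
  have hdist : dist X Y = Real.sqrt E := by
    rw [EuclideanSpace.dist_eq, Fin.sum_univ_four]
    simp [Real.dist_eq, sq_abs, hE]
  have hρpos : 0 < ρ := by rw [hρ]; exact div_pos hs3p hup
  have hρpos' : 0 < ρ' := by rw [hρ']; exact div_pos hs3p hup'
  have hrr : (0:ℝ) ≤ ρ + ρ' := by linarith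
  have hTR1 : (1:ℝ) ≤ (T:ℝ) := by exact_mod_cast hTpos
  have hPpos : (0:ℝ) < (2 + s6*(h:ℝ)) * (2 + s6*(h':ℝ)) := mul_pos hup hup'
  have hnn : (ρ + ρ')^2 ≤ E := by
    rw [hEval]
    have h12 : (0:ℝ) ≤ 12 * ((T:ℝ) - 1) / ((2 + s6*h) * (2 + s6*h')) :=
      div_nonneg (by linarith) hPpos.le
    linarith
  have hE0 : (0:ℝ) ≤ E := le_trans (sq_nonneg _) hnn
  have hge : ρ + ρ' ≤ dist X Y := by
    rw [hdist]
    calc ρ + ρ' = Real.sqrt ((ρ + ρ')^2) := (Real.sqrt_sq hrr).symm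
    _ ≤ Real.sqrt E := Real.sqrt_le_sqrt hnn
  refine ⟨hge, ?_, ?_⟩
  · intro heq
    have hsq2 : E = (ρ + ρ')^2 := by
      have h2 := congrArg (fun x => x^2) (hdist.symm.trans heq)
      simpa [Real.sq_sqrt hE0] using h2
    have hz : 12 * ((T:ℝ) - 1) / ((2 + s6*h) * (2 + s6*h')) = 0 := by
      rw [hEval] at hsq2; linarith
    have hnum : 12 * ((T:ℝ) - 1) = 0 := by
      rcases div_eq_zero_iff.mp hz with h1 | h1
      · exact h1
      · exact absurd h1 (ne_of_gt hPpos)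
    have : (T:ℝ) = 1 := by linarith
    exact_mod_cast this
  · intro hT1
    have hTx : (T:ℝ) = 1 := by exact_mod_cast hT1
    have : E = (ρ + ρ')^2 := by rw [hEval, hTx]; simp
    rw [hdist, this, Real.sqrt_sq hrr]
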